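/- Let (A,B) be a nonempty, bounded, closed and convex pair in a uniformly convex Banach space X and let T : A ∪ B → A ∪ B be a noncyclic contraction. Fix x₀ ∈ A₀ and define x_n := Tⁿx₀ and y_n := P x_n for all n ∈ ℕ, where P x_n is the unique point of B₀ with ‖x_n − Px_n‖ = dist(A,B). Then the sequence {(x_n, y_n)} ⊆ A₀ × B₀ converges to a best proximity pair of T: there exists (p,q) ∈ A₀ × B₀ with Tp = p, Tq = q, ‖p−q‖ = dist(A,B), x_n → p and y_n → q. -/
import Mathlib

open Set Filter Topology

/-- `setDist A B = inf {‖x - y‖ : x ∈ A, y ∈ B}`. -/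
noncomputable def setDist {X : Type*} [NormedAddCommGroup X] (A B : Set X) : ℝ :=
  sInf ((fun p : X × X => ‖p.1 - p.2‖) '' (A ×ˢ B))

/-- `A₀ = {x ∈ A : ‖x - y‖ = dist(A,B) for some y ∈ B}`. -/
noncomputable def proxA {X : Type*} [NormedAddCommGroup X] (A B : Set X) : Set X :=
  {x ∈ A | ∃ y ∈ B, ‖x - y‖ = setDist A B}

/-- `B₀ = {y ∈ B : ‖x - y‖ = dist(A,B) for some x ∈ A}`. -/
noncomputable def proxB {X : Type*} [NormedAddCommGroup X] (A B : Set X) : Set X :=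
  {y ∈ B | ∃ x ∈ A, ‖x - y‖ = setDist A B}


lemma uc_scaled {X : Type*} [NormedAddCommGroup X] [NormedSpace ℝ X] [UniformConvexSpace X]
    {ε : ℝ} (hε : 0 < ε) :
    ∃ δ : ℝ, 0 < δ ∧ δ ≤ 1 ∧ ∀ R : ℝ, 0 < R → ∀ a b : X, ‖a‖ ≤ R → ‖b‖ ≤ R →
      ε * R ≤ ‖a - b‖ → ‖a + b‖ ≤ (2 - δ) * R := by
  obtain ⟨δ, hδ, h⟩ := exists_forall_closed_ball_dist_add_le_two_sub X hε
  refine ⟨min δ 1, lt_min hδ one_pos, min_le_right _ _, fun R hR a b ha hb hab => ?_⟩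
  have hRinv : (0:ℝ) ≤ R⁻¹ := inv_nonneg.2 hR.le
  have hna : ‖R⁻¹ • a‖ ≤ 1 := by
    rw [norm_smul, Real.norm_eq_abs, abs_of_nonneg hRinv]
    rw [inv_mul_le_one₀ hR]
    simpa using ha
  have hnb : ‖R⁻¹ • b‖ ≤ 1 := by
    rw [norm_smul, Real.norm_eq_abs, abs_of_nonneg hRinv]
    rw [inv_mul_le_one₀ hR]
    simpa using hb
  have hnab : ε ≤ ‖R⁻¹ • a - R⁻¹ • b‖ := by
    rw [← smul_sub, norm_smul, Real.norm_eq_abs, abs_of_nonneg hRinv,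
      le_inv_mul_iff₀ hR, mul_comm]
    exact hab
  have := h hna hnb hnab
  rw [← smul_add, norm_smul, Real.norm_eq_abs, abs_of_nonneg hRinv,
    inv_mul_le_iff₀ hR] at this
  calc ‖a + b‖ ≤ (2 - δ) * R := by linarith [this]
    _ ≤ (2 - min δ 1) * R := by
        have : min δ 1 ≤ δ := min_le_left _ _
        nlinarith

lemma key_unique {X : Type*} [NormedAddCommGroup X] [NormedSpace ℝ X] [UniformConvexSpace X]
    {d : ℝ} {S : Set X} (hS : Convex ℝ S) {z q q' : X} (hq : q ∈ S) (hq' : q' ∈ S)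
    (hlow : ∀ w ∈ S, d ≤ ‖z - w‖) (h1 : ‖z - q‖ = d) (h2 : ‖z - q'‖ = d) : q = q' := by
  have hm : (1/2 : ℝ) • q + (1/2 : ℝ) • q' ∈ S :=
    hS hq hq' (by norm_num) (by norm_num) (by norm_num)
  have hlm := hlow _ hm
  have hzm : z - ((1/2 : ℝ) • q + (1/2 : ℝ) • q') = (1/2 : ℝ) • ((z - q) + (z - q')) := by
    rw [smul_add, smul_sub, smul_sub]
    module
  have hnorm : ‖(z - q) + (z - q')‖ = ‖z - q‖ + ‖z - q'‖ := by
    have hle : ‖(z - q) + (z - q')‖ ≤ 2 * d := by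
      calc ‖(z - q) + (z - q')‖ ≤ ‖z - q‖ + ‖z - q'‖ := norm_add_le _ _
        _ = 2 * d := by rw [h1, h2]; ring
    have hge : 2 * d ≤ ‖(z - q) + (z - q')‖ := by
      have : ‖z - ((1/2 : ℝ) • q + (1/2 : ℝ) • q')‖ = (1/2) * ‖(z - q) + (z - q')‖ := by
        rw [hzm, norm_smul]; norm_num
      linarith [hlm.trans_eq this]
    rw [h1, h2]
    linarith
  exact sub_right_injective (eq_of_norm_eq_of_norm_add_eq (h1.trans h2.symm) hnorm)

lemma pow_mul_eventually_lt {α M c : ℝ} (hα : α ∈ Set.Ioo (0:ℝ) 1) (hc : 0 < c) :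
    ∃ N : ℕ, α ^ N * M < c := by
  have h : Filter.Tendsto (fun n : ℕ => α ^ n * M) atTop (nhds (0 * M)) :=
    (tendsto_pow_atTop_nhds_zero_of_lt_one hα.1.le hα.2).mul_const M
  rw [zero_mul] at h
  exact (h.eventually (gt_mem_nhds hc)).exists

lemma cauchy_helper {X : Type*} [NormedAddCommGroup X] [NormedSpace ℝ X] [UniformConvexSpace X]
    {d M α : ℝ} (hd : 0 ≤ d) (hM : 0 ≤ M) (hα : α ∈ Set.Ioo (0:ℝ) 1)
    (u z : ℕ → X) {S : Set X} (hS : Convex ℝ S) (hu : ∀ n, u n ∈ S)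
    (hlow : ∀ n, ∀ w ∈ S, d ≤ ‖w - z n‖)
    (hnear : ∀ N n, N ≤ n → ‖u n - z N‖ ≤ α ^ N * M + d)
    (heq : ∀ n, ‖u n - z n‖ = d) : CauchySeq u := by
  rw [Metric.cauchySeq_iff']
  intro ε hε
  rcases eq_or_lt_of_le hd with hd0 | hdpos
  · obtain ⟨N, hN⟩ := pow_mul_eventually_lt (M := M) hα hε
    refine ⟨N, fun n hn => ?_⟩
    rw [dist_eq_norm]
    calc ‖u n - u N‖ = ‖(u n - z N) - (u N - z N)‖ := by rw [sub_sub_sub_cancel_right]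
      _ ≤ ‖u n - z N‖ + ‖u N - z N‖ := norm_sub_le _ _
      _ ≤ (α ^ N * M + d) + d := add_le_add (hnear N n hn) (heq N).le
      _ < ε := by rw [← hd0] at *; linarith
  · have hdM : 0 < d + M := by linarith
    obtain ⟨δ, hδ0, hδ1, hδ⟩ := uc_scaled (X := X) (div_pos hε hdM)
    obtain ⟨N, hN⟩ := pow_mul_eventually_lt (M := M) hα (by positivity : (0:ℝ) < δ * d / 2)
    refine ⟨N, fun n hn => ?_⟩
    rw [dist_eq_norm]
    by_contra hcon
    push_neg at hcon
    set t := α ^ N * M with ht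
    have ht0 : 0 ≤ t := mul_nonneg (pow_nonneg hα.1.le N) hM
    have hR : (0:ℝ) < d + t := by linarith
    have ha : ‖u n - z N‖ ≤ d + t := by linarith [hnear N n hn]
    have hb : ‖u N - z N‖ ≤ d + t := by rw [heq]; linarith
    have htM : t ≤ M := by
      have h1 : α ^ N ≤ 1 := pow_le_one₀ hα.1.le hα.2.le
      nlinarith
    have hab : ε / (d + M) * (d + t) ≤ ‖(u n - z N) - (u N - z N)‖ := by
      rw [sub_sub_sub_cancel_right]
      have h1 : ε / (d + M) * (d + t) ≤ ε := by
        rw [div_mul_eq_mul_div, div_le_iff₀ hdM]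
        nlinarith
      linarith
    have h2 := hδ (d + t) hR _ _ ha hb hab
    have hm : (1/2 : ℝ) • u n + (1/2 : ℝ) • u N ∈ S :=
      hS (hu n) (hu N) (by norm_num) (by norm_num) (by norm_num)
    have hlm := hlow N _ hm
    have hzm : (1/2 : ℝ) • u n + (1/2 : ℝ) • u N - z N
        = (1/2 : ℝ) • ((u n - z N) + (u N - z N)) := by module
    rw [hzm, norm_smul] at hlm
    simp only [Real.norm_eq_abs] at hlm
    rw [abs_of_nonneg (by norm_num : (0:ℝ) ≤ 1/2)] at hlm
    nlinarith

/-- Gabeleh: in a uniformly convex Banach space, for a nonempty bounded closed convex pair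
`(A, B)` and a noncyclic contraction `T`, the sequence `(xₙ, yₙ) = (Tⁿ x₀, P xₙ)` starting at
`x₀ ∈ A₀` converges to a best proximity pair of `T`.  Here `y n` denotes `P (x n)`, the unique
point of `B₀` proximal to `x n`. -/
theorem noncyclic_contraction_best_proximity_pair_convergence
    {X : Type*} [NormedAddCommGroup X] [NormedSpace ℝ X] [CompleteSpace X]
    [UniformConvexSpace X]
    (A B : Set X) (hA : A.Nonempty) (hB : B.Nonempty)
    (hAbd : Bornology.IsBounded A) (hBbd : Bornology.IsBounded B)
    (hAcl : IsClosed A) (hBcl : IsClosed B)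
    (hAconv : Convex ℝ A) (hBconv : Convex ℝ B)
    (T : X → X) (hTA : Set.MapsTo T A A) (hTB : Set.MapsTo T B B)
    (α : ℝ) (hα : α ∈ Set.Ioo (0 : ℝ) 1)
    (hT : ∀ x ∈ A, ∀ y ∈ B, ‖T x - T y‖ ≤ α * ‖x - y‖ + (1 - α) * setDist A B)
    (x₀ : X) (hx₀ : x₀ ∈ proxA A B)
    (x y : ℕ → X) (hx : ∀ n, x n = T^[n] x₀)
    (hy : ∀ n, y n ∈ proxB A B ∧ ‖x n - y n‖ = setDist A B) :
    ∃ p ∈ proxA A B, ∃ q ∈ proxB A B, T p = p ∧ T q = q ∧ ‖p - q‖ = setDist A B ∧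
      Tendsto x atTop (nhds p) ∧ Tendsto y atTop (nhds q) := by
  set d := setDist A B with hd_def
  -- basic facts
  have hbdd : BddBelow ((fun p : X × X => ‖p.1 - p.2‖) '' (A ×ˢ B)) :=
    ⟨0, by rintro r ⟨p, _, rfl⟩; exact norm_nonneg _⟩
  have hd_le : ∀ a ∈ A, ∀ b ∈ B, d ≤ ‖a - b‖ := fun a ha b hb =>
    csInf_le hbdd ⟨(a, b), ⟨ha, hb⟩, rfl⟩
  have hxy : ∀ n, ‖x n - y n‖ = d := fun n => (hy n).2
  have hd0 : 0 ≤ d := (hxy 0) ▸ norm_nonneg _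
  have hxA : ∀ n, x n ∈ A := by
    intro n
    rw [hx]
    induction n with
    | zero => exact hx₀.1
    | succ n ih => rw [Function.iterate_succ_apply']; exact hTA ih
  have hyB : ∀ n, y n ∈ B := fun n => ((hy n).1).1
  have hxrec : ∀ n, x (n + 1) = T (x n) := fun n => by
    rw [hx, hx, Function.iterate_succ_apply']
  -- y (n+1) = T (y n)
  have hyrec : ∀ n, y (n + 1) = T (y n) := by
    intro n
    have hle : ‖x (n + 1) - T (y n)‖ = d := by
      refine le_antisymm ?_ (hd_le _ (hxA _) _ (hTB (hyB n)))
      rw [hxrec]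
      calc ‖T (x n) - T (y n)‖ ≤ α * ‖x n - y n‖ + (1 - α) * d :=
            hT _ (hxA n) _ (hyB n)
        _ = d := by rw [hxy]; ring
    exact key_unique hBconv (hyB (n + 1)) (hTB (hyB n))
      (fun w hw => hd_le _ (hxA (n + 1)) w hw) (hxy (n + 1)) hle
  -- uniform bound
  obtain ⟨M, hM⟩ := Metric.isBounded_iff.1 (hAbd.union hBbd)
  have hMxy : ∀ j k, ‖x j - y k‖ ≤ M := fun j k => by
    rw [← dist_eq_norm]
    exact hM (Or.inl (hxA j)) (Or.inr (hyB k))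
  have hM0 : 0 ≤ M := le_trans (norm_nonneg _) (hMxy 0 0)
  -- contraction estimate
  have est : ∀ n j k, ‖x (n + j) - y (n + k)‖ ≤ α ^ n * ‖x j - y k‖ + (1 - α ^ n) * d := by
    intro n
    induction n with
    | zero => intro j k; simp
    | succ n ih =>
      intro j k
      have e1 : n + 1 + j = (n + j) + 1 := by ring
      have e2 : n + 1 + k = (n + k) + 1 := by ring
      rw [e1, e2, hxrec, hyrec]
      calc ‖T (x (n + j)) - T (y (n + k))‖
          ≤ α * ‖x (n + j) - y (n + k)‖ + (1 - α) * d := hT _ (hxA _) _ (hyB _)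
        _ ≤ α * (α ^ n * ‖x j - y k‖ + (1 - α ^ n) * d) + (1 - α) * d := by
            have := ih j k
            nlinarith [hα.1]
        _ = α ^ (n + 1) * ‖x j - y k‖ + (1 - α ^ (n + 1)) * d := by ring
  have hnearx : ∀ N n, N ≤ n → ‖x n - y N‖ ≤ α ^ N * M + d := by
    intro N n hn
    have e : N + (n - N) = n := Nat.add_sub_cancel' hn
    have h := est N (n - N) 0
    rw [e, Nat.add_zero] at h
    have hp : (0:ℝ) ≤ α ^ N := pow_nonneg hα.1.le N
    have hp1 : α ^ N ≤ 1 := pow_le_one₀ hα.1.le hα.2.le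
    nlinarith [hMxy (n - N) 0]
  have hneary : ∀ N n, N ≤ n → ‖y n - x N‖ ≤ α ^ N * M + d := by
    intro N n hn
    have e : N + (n - N) = n := Nat.add_sub_cancel' hn
    have h := est N 0 (n - N)
    rw [e, Nat.add_zero] at h
    rw [norm_sub_rev]
    have hp : (0:ℝ) ≤ α ^ N := pow_nonneg hα.1.le N
    have hp1 : α ^ N ≤ 1 := pow_le_one₀ hα.1.le hα.2.le
    nlinarith [hMxy 0 (n - N)]
  -- Cauchy sequences
  have hcx : CauchySeq x :=
    cauchy_helper hd0 hM0 hα x y hAconv hxA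
      (fun n w hw => hd_le w hw _ (hyB n)) hnearx hxy
  have hcy : CauchySeq y :=
    cauchy_helper hd0 hM0 hα y x hBconv hyB
      (fun n w hw => by rw [norm_sub_rev]; exact hd_le _ (hxA n) w hw) hneary
      (fun n => by rw [norm_sub_rev]; exact hxy n)
  obtain ⟨p, hp⟩ := cauchySeq_tendsto_of_complete hcx
  obtain ⟨q, hq⟩ := cauchySeq_tendsto_of_complete hcy
  have hpA : p ∈ A := hAcl.mem_of_tendsto hp (Eventually.of_forall hxA)
  have hqB : q ∈ B := hBcl.mem_of_tendsto hq (Eventually.of_forall hyB)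
  -- ‖p - q‖ = d
  have hpq : ‖p - q‖ = d := by
    have h1 : Tendsto (fun n => ‖x n - y n‖) atTop (nhds ‖p - q‖) := (hp.sub hq).norm
    have h2 : (fun n => ‖x n - y n‖) = fun _ => d := funext hxy
    rw [h2] at h1
    exact tendsto_nhds_unique h1 tendsto_const_nhds
  -- T p = p
  have hTyq : Tendsto (fun n => T (y n)) atTop (nhds q) := by
    have h2 : (fun n => T (y n)) = fun n => y (n + 1) := funext fun n => (hyrec n).symm
    rw [h2]
    exact hq.comp (tendsto_add_atTop_nat 1)
  have hTxp : Tendsto (fun n => T (x n)) atTop (nhds p) := by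
    have h2 : (fun n => T (x n)) = fun n => x (n + 1) := funext fun n => (hxrec n).symm
    rw [h2]
    exact hp.comp (tendsto_add_atTop_nat 1)
  have hTpq : ‖T p - q‖ = d := by
    refine le_antisymm ?_ (hd_le _ (hTA hpA) _ hqB)
    have l1 : Tendsto (fun n => ‖T p - T (y n)‖) atTop (nhds ‖T p - q‖) :=
      (tendsto_const_nhds.sub hTyq).norm
    have l2 : Tendsto (fun n => α * ‖p - y n‖ + (1 - α) * d) atTop
        (nhds (α * ‖p - q‖ + (1 - α) * d)) :=
      (((tendsto_const_nhds.sub hq).norm).const_mul α).add tendsto_const_nhds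
    have h3 := le_of_tendsto_of_tendsto' l1 l2
      (fun n => hT _ hpA _ (hyB n))
    rw [hpq] at h3
    linarith
  have hTp : T p = p := by
    refine (key_unique hAconv (hTA hpA) hpA
      (fun w hw => by rw [norm_sub_rev]; exact hd_le w hw _ hqB) ?_ ?_)
    · rw [norm_sub_rev]; exact hTpq
    · rw [norm_sub_rev]; exact hpq
  -- T q = q
  have hpTq : ‖p - T q‖ = d := by
    refine le_antisymm ?_ (hd_le _ hpA _ (hTB hqB))
    have l1 : Tendsto (fun n => ‖T (x n) - T q‖) atTop (nhds ‖p - T q‖) :=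
      (hTxp.sub tendsto_const_nhds).norm
    have l2 : Tendsto (fun n => α * ‖x n - q‖ + (1 - α) * d) atTop
        (nhds (α * ‖p - q‖ + (1 - α) * d)) :=
      (((hp.sub tendsto_const_nhds).norm).const_mul α).add tendsto_const_nhds
    have h3 := le_of_tendsto_of_tendsto' l1 l2
      (fun n => hT _ (hxA n) _ hqB)
    rw [hpq] at h3
    linarith
  have hTq : T q = q := by
    exact (key_unique hBconv (hTB hqB) hqB
      (fun w hw => hd_le _ hpA w hw) hpTq hpq)
  exact ⟨p, ⟨hpA, q, hqB, hpq⟩, q, ⟨hqB, p, hpA, hpq⟩, hTp, hTq, hpq, hp, hq⟩
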